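/- Let a ∈ ℤ and define g_a(k) := max(a − k, 0, k − a − 1) for k ∈ ℤ and G_a(x) := Σ_{s∈S} g_a(x(s)) for x ∈ ℤ^S. An element z of an M-convex set B ∩ ℤ^S is a minimizer of G_a over B ∩ ℤ^S if and only if for all s, t ∈ S: z(s) ≤ a, z(t) ≥ a+1 and z(t) ≥ z(s)+2 imply z + χ_s − χ_t ∉ B ∩ ℤ^S. -/

import Mathlib

open Finset

variable {α : Type*} [Fintype α] [DecidableEq α]

def Supermodular (p : Finset α → EReal) : Prop :=
  ∀ X Y : Finset α, p X + p Y ≤ p (X ∩ Y) + p (X ∪ Y)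

/-- `p` takes values in `ℤ ∪ {−∞}`. -/
def IntegerValued (p : Finset α → EReal) : Prop :=
  ∀ X : Finset α, p X = ⊥ ∨ ∃ n : ℤ, p X = ((n : ℝ) : EReal)

/-- `x` belongs to the base-polyhedron `B'(p)`:
`x(S) = p(S)` and `x(Z) ≥ p(Z)` for every `Z ⊆ S`. -/
def memB (p : Finset α → EReal) (x : α → ℝ) : Prop :=
  ((∑ s, x s : ℝ) : EReal) = p Finset.univ ∧
    ∀ Z : Finset α, p Z ≤ ((∑ s ∈ Z, x s : ℝ) : EReal)

/-- `x` is an integral element of the base-polyhedron `B'(p)` (a member of the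
M-convex set `B ∩ ℤ^S`). -/
def memBZ (p : Finset α → EReal) (x : α → ℤ) : Prop :=
  ((((∑ s, x s : ℤ) : ℝ)) : EReal) = p Finset.univ ∧
    ∀ Z : Finset α, p Z ≤ ((((∑ s ∈ Z, x s : ℤ) : ℝ)) : EReal)

/-- Lexicographic comparison `l1 ≤_lex l2` of lists. -/
def lexLE {β : Type*} [LT β] (l1 l2 : List β) : Prop :=
  l1 = l2 ∨ List.Lex (· < ·) l1 l2

/-- The components of `x` sorted in decreasing order. -/
noncomputable def sortDescR (x : α → ℝ) : List ℝ :=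
  (Multiset.sort (Finset.univ.val.map x) (· ≤ ·)).reverse

/-- The components of the integral vector `x` sorted in decreasing order. -/
def sortDescZ (x : α → ℤ) : List ℤ :=
  (Multiset.sort (Finset.univ.val.map x) (· ≤ ·)).reverse

/-- `m` is a decreasingly minimal element of the base-polyhedron `B'(p)`. -/
def DecMinR (p : Finset α → EReal) (m : α → ℝ) : Prop :=
  memB p m ∧ ∀ y : α → ℝ, memB p y → lexLE (sortDescR m) (sortDescR y)

/-- `m` is a decreasingly minimal element of the M-convex set `B'(p) ∩ ℤ^S`. -/
def DecMinZ (p : Finset α → EReal) (m : α → ℤ) : Prop :=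
  memBZ p m ∧ ∀ y : α → ℤ, memBZ p y → lexLE (sortDescZ m) (sortDescZ y)

/-- The vector `z + χ_s − χ_t`. -/
def move (z : α → ℤ) (s t : α) : α → ℤ :=
  fun u => z u + (if u = s then 1 else 0) - (if u = t then 1 else 0)

/-- `g_a(k) = max(a − k, 0, k − a − 1)`. -/
def ga (a k : ℤ) : ℤ := max (a - k) (max 0 (k - a - 1))

/-- `G_a(x) = Σ_{s∈S} g_a(x(s))`. -/
def Ga (a : ℤ) (x : α → ℤ) : ℤ := ∑ s, ga a (x s)

set_option linter.unusedSectionVars false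

/-! ### auxiliary lemmas -/

lemma ga_eq (a k : ℤ) : ga a k = if k ≤ a then a - k else k - a - 1 := by
  simp only [ga, max_def]; split_ifs <;> omega

lemma ga_slope_mono (a k l : ℤ) (h : k ≤ l) :
    ga a (k + 1) - ga a k ≤ ga a (l + 1) - ga a l := by
  simp only [ga_eq]; split_ifs <;> omega

lemma ga_improve_iff (a b c : ℤ) :
    ga a (b + 1) + ga a (c - 1) < ga a b + ga a c ↔ (b ≤ a ∧ a + 1 ≤ c ∧ b + 2 ≤ c) := by
  simp only [ga_eq]; split_ifs <;> omega

lemma sum_move (x : α → ℤ) (s t : α) (Z : Finset α) :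
    ∑ u ∈ Z, move x s t u
      = ∑ u ∈ Z, x u + (if s ∈ Z then 1 else 0) - (if t ∈ Z then 1 else 0) := by
  simp only [move, Finset.sum_sub_distrib, Finset.sum_add_distrib,
    Finset.sum_ite_eq' Z s (fun _ => (1:ℤ)), Finset.sum_ite_eq' Z t (fun _ => (1:ℤ))]

lemma Ga_move (a : ℤ) (x : α → ℤ) (s t : α) (hst : s ≠ t) :
    Ga a (move x s t)
      = Ga a x + (ga a (x s + 1) - ga a (x s)) + (ga a (x t - 1) - ga a (x t)) := by
  have h : ∀ u, ga a (move x s t u)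
      = ga a (x u) + ((if u = s then ga a (x s + 1) - ga a (x s) else 0)
        + (if u = t then ga a (x t - 1) - ga a (x t) else 0)) := by
    intro u
    by_cases hus : u = s
    · subst hus
      simp [move, hst]
    · by_cases hut : u = t
      · subst hut
        simp [move, hus]
      · simp [move, hus, hut]
  unfold Ga
  rw [Finset.sum_congr rfl (fun u _ => h u), Finset.sum_add_distrib, Finset.sum_add_distrib,
    Finset.sum_ite_eq' Finset.univ s, Finset.sum_ite_eq' Finset.univ t]
  simp; ring

def IsTight (p : Finset α → EReal) (x : α → ℤ) (Z : Finset α) : Prop :=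
  p Z = ((((∑ s ∈ Z, x s : ℤ) : ℝ)) : EReal)

lemma tight_inter_union (p : Finset α → EReal) (hsup : Supermodular p)
    (hint : IntegerValued p) (x : α → ℤ) (hx : memBZ p x)
    {X Y : Finset α} (hX : IsTight p x X) (hY : IsTight p x Y) :
    IsTight p x (X ∩ Y) ∧ IsTight p x (X ∪ Y) := by
  have hsum : ∑ u ∈ X ∪ Y, x u + ∑ u ∈ X ∩ Y, x u = ∑ u ∈ X, x u + ∑ u ∈ Y, x u :=
    Finset.sum_union_inter
  have h1 := hsup X Y
  rw [hX, hY] at h1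
  rcases hint (X ∩ Y) with hI | ⟨nI, hI⟩
  · rw [hI, EReal.bot_add] at h1
    exact absurd h1 (by rw [← EReal.coe_add]; simp)
  rcases hint (X ∪ Y) with hU | ⟨nU, hU⟩
  · rw [hU, EReal.add_bot] at h1
    exact absurd h1 (by rw [← EReal.coe_add]; simp)
  have hIle : nI ≤ ∑ u ∈ X ∩ Y, x u := by
    have := hx.2 (X ∩ Y); rw [hI] at this; exact_mod_cast this
  have hUle : nU ≤ ∑ u ∈ X ∪ Y, x u := by
    have := hx.2 (X ∪ Y); rw [hU] at this; exact_mod_cast this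
  rw [hI, hU] at h1
  have h2 : (∑ u ∈ X, x u) + (∑ u ∈ Y, x u) ≤ nI + nU := by exact_mod_cast h1
  constructor
  · show p (X ∩ Y) = _
    rw [hI]
    have : nI = ∑ u ∈ X ∩ Y, x u := by omega
    rw [this]
  · show p (X ∪ Y) = _
    rw [hU]
    have : nU = ∑ u ∈ X ∪ Y, x u := by omega
    rw [this]

lemma tight_univ (p : Finset α → EReal) (x : α → ℤ) (hx : memBZ p x) :
    IsTight p x (Finset.univ : Finset α) := hx.1.symm

lemma tight_empty (p : Finset α → EReal) (hp0 : p ∅ = 0) (x : α → ℤ) :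
    IsTight p x (∅ : Finset α) := by
  unfold IsTight; rw [hp0]; simp

lemma tight_inf (p : Finset α → EReal) (hsup : Supermodular p) (hint : IntegerValued p)
    (x : α → ℤ) (hx : memBZ p x) (s : α) {β : Type*} [DecidableEq β]
    (G : Finset β) (f : β → Finset α) (hG : ∀ b ∈ G, IsTight p x (f b) ∧ s ∈ f b) :
    IsTight p x (G.inf f) ∧ s ∈ G.inf f := by
  classical
  induction G using Finset.induction_on with
  | empty =>
    rw [Finset.inf_empty]
    exact ⟨tight_univ p x hx, Finset.mem_univ s⟩
  | @insert b B hb ih =>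
    rw [Finset.inf_insert]
    have h1 := hG b (Finset.mem_insert_self b B)
    have h2 := ih (fun c hc => hG c (Finset.mem_insert_of_mem hc))
    have h3 := tight_inter_union p hsup hint x hx h1.1 h2.1
    exact ⟨h3.1, Finset.mem_inter.2 ⟨h1.2, h2.2⟩⟩

lemma tight_sup (p : Finset α → EReal) (hp0 : p ∅ = 0) (hsup : Supermodular p)
    (hint : IntegerValued p) (x : α → ℤ) (hx : memBZ p x) (s : α) {β : Type*} [DecidableEq β]
    (G : Finset β) (f : β → Finset α) (hG : ∀ b ∈ G, IsTight p x (f b) ∧ s ∉ f b) :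
    IsTight p x (G.sup f) ∧ s ∉ G.sup f := by
  classical
  induction G using Finset.induction_on with
  | empty =>
    rw [Finset.sup_empty]
    exact ⟨tight_empty p hp0 x, Finset.notMem_empty s⟩
  | @insert b B hb ih =>
    rw [Finset.sup_insert]
    have h1 := hG b (Finset.mem_insert_self b B)
    have h2 := ih (fun c hc => hG c (Finset.mem_insert_of_mem hc))
    have h3 := tight_inter_union p hsup hint x hx h1.1 h2.1
    refine ⟨h3.2, fun hmem => ?_⟩
    rcases Finset.mem_union.1 hmem with h | h
    · exact h1.2 h
    · exact h2.2 h

lemma exists_min_tight (p : Finset α → EReal) (hsup : Supermodular p) (hint : IntegerValued p)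
    (x : α → ℤ) (hx : memBZ p x) (s : α) :
    ∃ T : Finset α, IsTight p x T ∧ s ∈ T ∧ ∀ Z, IsTight p x Z → s ∈ Z → T ⊆ Z := by
  classical
  set F : Finset (Finset α) := Finset.univ.filter (fun Z => IsTight p x Z ∧ s ∈ Z) with hF
  have hmemF : ∀ Z ∈ F, IsTight p x Z ∧ s ∈ Z := by
    intro Z hZ
    rw [hF, Finset.mem_filter] at hZ
    exact hZ.2
  obtain ⟨h1, h2⟩ := tight_inf p hsup hint x hx s F id hmemF
  refine ⟨F.inf id, h1, h2, fun Z hZt hZs => ?_⟩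
  have : Z ∈ F := by rw [hF, Finset.mem_filter]; exact ⟨Finset.mem_univ Z, hZt, hZs⟩
  have h3 : F.inf id ≤ id Z := Finset.inf_le this
  exact h3

lemma move_mem (p : Finset α → EReal) (hint : IntegerValued p)
    (x : α → ℤ) (hx : memBZ p x) (s t : α) (hst : s ≠ t)
    (h : ∀ Z, IsTight p x Z → t ∈ Z → s ∈ Z) : memBZ p (move x s t) := by
  constructor
  · rw [sum_move]
    simp only [Finset.mem_univ, if_pos]
    rw [show (∑ u, x u + 1 - 1 : ℤ) = ∑ u, x u by ring]
    exact hx.1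
  · intro Z
    rw [sum_move]
    by_cases htZ : t ∈ Z
    · by_cases hsZ : s ∈ Z
      · simpa [htZ, hsZ] using hx.2 Z
      · rcases hint Z with hb | ⟨n, hn⟩
        · rw [hb]; exact bot_le
        · have h1 : n ≤ ∑ u ∈ Z, x u := by
            have := hx.2 Z; rw [hn] at this; exact_mod_cast this
          have h2 : n ≠ ∑ u ∈ Z, x u := by
            intro he
            exact hsZ (h Z (by unfold IsTight; rw [hn, he]) htZ)
          rw [hn]
          simp only [htZ, hsZ, if_pos, if_neg, if_false, if_true]
          have : n ≤ ∑ u ∈ Z, x u + 0 - 1 := by omega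
          exact_mod_cast this
    · have h1 := hx.2 Z
      have h2 : (∑ u ∈ Z, x u : ℤ) ≤ ∑ u ∈ Z, x u + (if s ∈ Z then 1 else 0) - (if t ∈ Z then 1 else 0) := by
        split_ifs <;> omega
      exact le_trans h1 (by exact_mod_cast h2)

lemma key_exchange (p : Finset α → EReal) (hp0 : p ∅ = 0) (hsup : Supermodular p)
    (hint : IntegerValued p) (z y : α → ℤ) (hz : memBZ p z) (hy : memBZ p y)
    (s : α) (hs : y s < z s) :
    ∃ t, z t < y t ∧ t ≠ s ∧ memBZ p (move z t s) ∧ memBZ p (move y s t) := by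
  classical
  obtain ⟨T, hTt, hsT, hTmin⟩ := exists_min_tight p hsup hint z hz s
  set D : Finset α := (T.erase s).filter (fun t => z t < y t) with hD
  have hDsub : ∀ t ∈ D, t ∈ T ∧ t ≠ s ∧ z t < y t := by
    intro t ht
    rw [hD, Finset.mem_filter] at ht
    exact ⟨Finset.mem_of_mem_erase ht.1, Finset.ne_of_mem_erase ht.1, ht.2⟩
  -- D is nonempty
  have hDne : D.Nonempty := by
    by_contra hne
    rw [Finset.not_nonempty_iff_eq_empty] at hne
    have hall : ∀ t ∈ T.erase s, y t ≤ z t := by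
      intro t ht
      by_contra hc
      push_neg at hc
      have : t ∈ D := by rw [hD, Finset.mem_filter]; exact ⟨ht, hc⟩
      rw [hne] at this
      exact absurd this (Finset.notMem_empty t)
    have hTy : ∑ u ∈ T, y u < ∑ u ∈ T, z u := by
      rw [← Finset.insert_erase hsT, Finset.sum_insert (Finset.notMem_erase s T),
        Finset.sum_insert (Finset.notMem_erase s T)]
      have := Finset.sum_le_sum hall
      omega
    have h1 := hy.2 T
    rw [hTt] at h1
    have h2 : (∑ u ∈ T, z u) ≤ ∑ u ∈ T, y u := by exact_mod_cast h1
    omega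
  -- main claim: some t ∈ D admits the move on y
  have hmain : ∃ t ∈ D, memBZ p (move y s t) := by
    by_contra hno
    push_neg at hno
    have hS : ∀ t ∈ D, ∃ St : Finset α, IsTight p y St ∧ t ∈ St ∧ s ∉ St := by
      intro t ht
      obtain ⟨htT, hts, hzy⟩ := hDsub t ht
      have hnmem := hno t ht
      have hsum1 : ((((∑ u, move y s t u : ℤ) : ℝ)) : EReal) = p Finset.univ := by
        rw [sum_move]
        simp only [Finset.mem_univ, if_pos]
        rw [show (∑ u, y u + 1 - 1 : ℤ) = ∑ u, y u by ring]
        exact hy.1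
      have hbad : ¬ ∀ Z : Finset α, p Z ≤ ((((∑ u ∈ Z, move y s t u : ℤ) : ℝ)) : EReal) :=
        fun hc => hnmem ⟨hsum1, hc⟩
      push_neg at hbad
      obtain ⟨Z, hZ⟩ := hbad
      rw [sum_move] at hZ
      by_cases htZ : t ∈ Z
      · by_cases hsZ : s ∈ Z
        · exact absurd hZ (not_lt.2 (by simpa [htZ, hsZ] using hy.2 Z))
        · rcases hint Z with hb | ⟨n, hn⟩
          · rw [hb] at hZ
            exact absurd hZ (by simp)
          · have h1 : n ≤ ∑ u ∈ Z, y u := by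
              have := hy.2 Z; rw [hn] at this; exact_mod_cast this
            have h2 : ¬ n ≤ ∑ u ∈ Z, y u + 0 - 1 := by
              intro hc
              refine absurd hZ (not_lt.2 ?_)
              rw [hn]
              simp only [htZ, hsZ, if_true, if_false]
              exact_mod_cast hc
            refine ⟨Z, ?_, htZ, hsZ⟩
            unfold IsTight
            rw [hn]
            have : n = ∑ u ∈ Z, y u := by omega
            rw [this]
      · refine absurd hZ (not_lt.2 ?_)
        refine le_trans (hy.2 Z) ?_
        have h2 : (∑ u ∈ Z, y u : ℤ) ≤ ∑ u ∈ Z, y u + (if s ∈ Z then 1 else 0) - (if t ∈ Z then 1 else 0) := by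
          split_ifs <;> omega
        exact_mod_cast h2
    choose St hSt1 hSt2 hSt3 using hS
    set U : Finset α := D.attach.sup (fun t => St t.1 t.2) with hU
    have hUt : IsTight p y U ∧ s ∉ U := by
      apply tight_sup p hp0 hsup hint y hy s
      intro b _
      exact ⟨hSt1 b.1 b.2, hSt3 b.1 b.2⟩
    have hDU : ∀ t ∈ D, t ∈ U := by
      intro t ht
      have hle : St t ht ≤ U :=
        Finset.le_sup (f := fun b : {x // x ∈ D} => St b.1 b.2) (Finset.mem_attach D ⟨t, ht⟩)
      exact hle (hSt2 t ht)
    -- supermodularity contradiction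
    have h1 := hsup T U
    rw [hTt, hUt.1] at h1
    rcases hint (T ∩ U) with hI | ⟨nI, hI⟩
    · rw [hI, EReal.bot_add] at h1
      exact absurd h1 (by rw [← EReal.coe_add]; simp)
    rcases hint (T ∪ U) with hUU | ⟨nU, hUU⟩
    · rw [hUU, EReal.add_bot] at h1
      exact absurd h1 (by rw [← EReal.coe_add]; simp)
    have hIle : nI ≤ ∑ u ∈ T ∩ U, z u := by
      have := hz.2 (T ∩ U); rw [hI] at this; exact_mod_cast this
    have hUle : nU ≤ ∑ u ∈ T ∪ U, y u := by
      have := hy.2 (T ∪ U); rw [hUU] at this; exact_mod_cast this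
    rw [hI, hUU] at h1
    have h2 : (∑ u ∈ T, z u) + (∑ u ∈ U, y u) ≤ nI + nU := by exact_mod_cast h1
    have e1 : ∑ u ∈ T, z u = ∑ u ∈ T ∩ U, z u + ∑ u ∈ T \ U, z u := by
      rw [← Finset.sum_union (Finset.disjoint_of_subset_left (Finset.inter_subset_right) Finset.sdiff_disjoint.symm)]
      rw [Finset.union_comm, Finset.sdiff_union_inter]
    have e2 : ∑ u ∈ T ∪ U, y u = ∑ u ∈ U, y u + ∑ u ∈ T \ U, y u := by
      rw [← Finset.sum_union (Finset.sdiff_disjoint.symm), Finset.union_comm U (T \ U)]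
      rw [Finset.sdiff_union_self_eq_union, Finset.union_comm]
    have hpt : ∑ u ∈ T \ U, y u < ∑ u ∈ T \ U, z u := by
      apply Finset.sum_lt_sum
      · intro u hu
        rw [Finset.mem_sdiff] at hu
        by_cases hus : u = s
        · subst hus; omega
        · by_contra hc
          push_neg at hc
          have : u ∈ D := by
            rw [hD, Finset.mem_filter]
            exact ⟨Finset.mem_erase.2 ⟨hus, hu.1⟩, hc⟩
          exact hu.2 (hDU u this)
      · refine ⟨s, ?_, hs⟩
        rw [Finset.mem_sdiff]
        exact ⟨hsT, hUt.2⟩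
    omega
  obtain ⟨t, htD, hmv⟩ := hmain
  obtain ⟨htT, hts, hzy⟩ := hDsub t htD
  refine ⟨t, hzy, hts, ?_, hmv⟩
  exact move_mem p hint z hz t s hts (fun Z hZ hsZ => hTmin Z hZ hsZ htT)

lemma descent (p : Finset α → EReal) (hp0 : p ∅ = 0) (hsup : Supermodular p)
    (hint : IntegerValued p) (a : ℤ) (z : α → ℤ) (hz : memBZ p z)
    (hloc : ∀ s t : α, z s ≤ a → a + 1 ≤ z t → z s + 2 ≤ z t → ¬ memBZ p (move z s t))
    (y : α → ℤ) (hy : memBZ p y) (hlt : Ga a y < Ga a z) :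
    ∃ y' : α → ℤ, memBZ p y' ∧ Ga a y' < Ga a z ∧
      (∑ u, (y' u - z u).natAbs) < (∑ u, (y u - z u).natAbs) := by
  classical
  -- find s with y s < z s
  have hsumeq : (∑ u, z u) = ∑ u, y u := by
    have h1 := hz.1
    have h2 := hy.1
    rw [← h2] at h1
    exact_mod_cast h1
  have hs : ∃ s, y s < z s := by
    by_contra hc
    push_neg at hc
    have hall : ∀ u, z u = y u := by
      intro u
      by_contra hne
      have hstrict : (∑ u, z u) < ∑ u, y u :=
        Finset.sum_lt_sum (fun i _ => hc i) ⟨u, Finset.mem_univ u, lt_of_le_of_ne (hc u) hne⟩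
      omega
    have : z = y := funext hall
    rw [this] at hlt
    omega
  obtain ⟨s, hs⟩ := hs
  obtain ⟨t, hty, hts, hzmem, hymem⟩ := key_exchange p hp0 hsup hint z y hz hy s hs
  have hst : s ≠ t := fun h => hts h.symm
  refine ⟨move y s t, hymem, ?_, ?_⟩
  · -- Ga decreases weakly
    have hslope : ga a (z s) - ga a (z s - 1) ≤ ga a (z t + 1) - ga a (z t) := by
      by_contra hc
      push_neg at hc
      have himp : ga a (z t + 1) + ga a (z s - 1) < ga a (z t) + ga a (z s) := by omega
      rw [ga_improve_iff] at himp
      exact hloc t s himp.1 himp.2.1 himp.2.2 hzmem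
    have h1 : ga a (y s + 1) - ga a (y s) ≤ ga a (z s) - ga a (z s - 1) := by
      have h := ga_slope_mono a (y s) (z s - 1) (by omega)
      have e : z s - 1 + 1 = z s := by ring
      rw [e] at h
      exact h
    have h2 : ga a (z t + 1) - ga a (z t) ≤ ga a (y t) - ga a (y t - 1) := by
      have h := ga_slope_mono a (z t) (y t - 1) (by omega)
      have e : y t - 1 + 1 = y t := by ring
      rw [e] at h
      exact h
    rw [Ga_move a y s t hst]
    omega
  · -- distance decreases
    apply Finset.sum_lt_sum
    · intro u _
      by_cases hus : u = s
      · subst hus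
        simp [move, hst]
        omega
      · by_cases hut : u = t
        · subst hut
          simp [move, hus]
          omega
        · simp [move, hus, hut]
    · refine ⟨s, Finset.mem_univ s, ?_⟩
      simp [move, hst]
      omega


/-- `z ∈ B ∩ ℤ^S` minimizes `G_a` over `B ∩ ℤ^S` iff for all `s, t`:
`z(s) ≤ a`, `z(t) ≥ a+1`, `z(t) ≥ z(s)+2` imply `z + χ_s − χ_t ∉ B ∩ ℤ^S`. -/
theorem Ga_minimizer_iff_relaxed_exchange (p : Finset α → EReal) (hp0 : p ∅ = 0)
    (hfin : p (Finset.univ : Finset α) ≠ ⊥) (hsup : Supermodular p)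
    (hint : IntegerValued p) (a : ℤ) (z : α → ℤ) (hz : memBZ p z) :
    (∀ y : α → ℤ, memBZ p y → Ga a z ≤ Ga a y) ↔
      (∀ s t : α, z s ≤ a → a + 1 ≤ z t → z s + 2 ≤ z t → ¬ memBZ p (move z s t)) := by
  constructor
  · intro hmin s t h1 h2 h3 hmem
    have hst : s ≠ t := by intro h; subst h; omega
    have hG := hmin (move z s t) hmem
    rw [Ga_move a z s t hst] at hG
    have himp := (ga_improve_iff a (z s) (z t)).2 ⟨h1, h2, h3⟩
    omega
  · intro hloc y hy
    by_contra hlt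
    push_neg at hlt
    classical
    let P : ℕ → Prop := fun n => ∃ w : α → ℤ, memBZ p w ∧ Ga a w < Ga a z ∧
      (∑ u, (w u - z u).natAbs) = n
    have hP : ∃ n, P n := ⟨_, y, hy, hlt, rfl⟩
    obtain ⟨w, hw, hwlt, hwd⟩ := Nat.find_spec hP
    obtain ⟨w', h1, h2, h3⟩ := descent p hp0 hsup hint a z hz hloc w hw hwlt
    have : P (∑ u, (w' u - z u).natAbs) := ⟨w', h1, h2, rfl⟩
    exact Nat.find_min hP (by omega) this
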